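/- The outer expectation $\overline{\mathbb{E}}$ defined in the paper is countably subadditive: for any sequence of nonnegative processes $Z^k : [0,T] \times \Omega \to [0,+\infty]$, $\overline{\mathbb{E}}\left(\sum_{k=1}^\infty Z^k\right) \le \sum_{k=1}^\infty \overline{\mathbb{E}} Z^k$. -/

import Mathlib

open Set Filter
open scoped ENNReal

noncomputable section

/-- The space of continuous `d`-dimensional price paths. -/
def PricePath (d : ℕ) : Type := {ω : ℝ → (Fin d → ℝ) // Continuous ω}

/-- Two paths agree up to (extended) time `u`. -/
def AgreeUpTo {d : ℕ} (ω ω' : PricePath d) (u : ℝ≥0∞) : Prop :=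
  ∀ s : ℝ, 0 ≤ s → ENNReal.ofReal s ≤ u → ω.1 s = ω'.1 s

/-- A stopping time with respect to the natural filtration of the coordinate process,
characterized Galmarino-style: the value of `τ` is determined by the path up to time `τ`. -/
def IsStoppingTimeE {d : ℕ} (τ : PricePath d → ℝ≥0∞) : Prop :=
  ∀ ω ω' : PricePath d, AgreeUpTo ω ω' (τ ω) → τ ω = τ ω'

/-- `g` is `𝓕_τ`-measurable: its value is determined by the path up to time `τ`. -/
def MeasurableAtTime {d : ℕ} (τ : PricePath d → ℝ≥0∞) (g : PricePath d → Fin d → ℝ) : Prop :=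
  ∀ ω ω' : PricePath d, AgreeUpTo ω ω' (τ ω) → g ω = g ω'

/-- A simple trading strategy: a nondecreasing sequence of stopping times, eventually
constant on every path, together with bounded `𝓕_{τ_l}`-measurable positions `g_l`. -/
structure SimpleStrategy (d : ℕ) (T : ℝ) where
  τ : ℕ → PricePath d → ℝ≥0∞
  g : ℕ → PricePath d → Fin d → ℝ
  stopping : ∀ l, IsStoppingTimeE (τ l)
  zero : ∀ ω, τ 0 ω = 0
  mono : ∀ l ω, τ l ω ≤ τ (l + 1) ω
  eventuallyConst : ∀ ω, ∃ L, ∀ l, L ≤ l → τ l ω = τ L ω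
  adapted : ∀ l, MeasurableAtTime (τ l) (g l)
  bdd : ∀ l, ∃ C : ℝ, ∀ ω i, |g l ω i| ≤ C

/-- The value of the path at the stopped time `u ⊓ t`. -/
def stopVal {d : ℕ} (ω : PricePath d) (u : ℝ≥0∞) (t : ℝ) : Fin d → ℝ :=
  ω.1 (if u = ∞ then t else min u.toReal t)

/-- The integral process `(G ⬝ S)_t(ω)` of a simple strategy. -/
def integ {d : ℕ} {T : ℝ} (G : SimpleStrategy d T) (t : ℝ) (ω : PricePath d) : ℝ :=
  ∑' l : ℕ, ∑ i, G.g l ω i * (stopVal ω (G.τ (l + 1) ω) t i - stopVal ω (G.τ l ω) t i)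

/-- `λ`-admissibility: the wealth `(G ⬝ S)_t` never drops below `-λ`. -/
def Admissible {d : ℕ} {T : ℝ} (lam : ℝ) (G : SimpleStrategy d T) : Prop :=
  ∀ (ω : PricePath d) (t : ℝ), t ∈ Icc (0:ℝ) T → -lam ≤ integ G t ω

/-- A set is Vovk-null if its indicator can be superhedged at arbitrarily small cost. -/
def VovkNull {d : ℕ} (T : ℝ) (A : Set (PricePath d)) : Prop :=
  ∀ ε : ℝ, 0 < ε → ∃ H : ℕ → SimpleStrategy d T, (∀ n, Admissible ε (H n)) ∧
    ∀ ω ∈ A, (1 : EReal) ≤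
      Filter.liminf (fun n => ((ε + integ (H n) T ω : ℝ) : EReal)) Filter.atTop

/-- A `[0,T]`-valued stopping time. -/
def IsStoppingTime01 {d : ℕ} (T : ℝ) (τ : PricePath d → ℝ) : Prop :=
  (∀ ω, τ ω ∈ Icc (0:ℝ) T) ∧
  ∀ ω ω' : PricePath d, AgreeUpTo ω ω' (ENNReal.ofReal (τ ω)) → τ ω = τ ω'

/-- The outer expectation of the paper: the minimal superhedging cost of `Z_τ`
simultaneously for all `[0,T]`-valued stopping times `τ`, for all paths outside some
null set. -/
def outerExp (d : ℕ) (T : ℝ) (Z : ℝ → PricePath d → ℝ≥0∞) : ℝ≥0∞ :=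
  sInf {l : ℝ≥0∞ | ∃ lam : ℝ, 0 < lam ∧ l = ENNReal.ofReal lam ∧
    ∃ Ω' : Set (PricePath d), VovkNull T Ω'ᶜ ∧
    ∃ H : ℕ → SimpleStrategy d T, (∀ n, Admissible lam (H n)) ∧
      ∀ ω ∈ Ω', ∀ τ : PricePath d → ℝ, IsStoppingTime01 T τ →
        ((Z (τ ω) ω : ℝ≥0∞) : EReal) ≤
          Filter.liminf (fun n => ((lam + integ (H n) (τ ω) ω : ℝ) : EReal)) Filter.atTop}

namespace VovkAux

attribute [local instance] Classical.propDecidable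

variable {d : ℕ} {T : ℝ}

lemma agree_mono {ω ω' : PricePath d} {u v : ℝ≥0∞} (huv : u ≤ v)
    (h : AgreeUpTo ω ω' v) : AgreeUpTo ω ω' u :=
  fun s hs hsu => h s hs (hsu.trans huv)

lemma agree_symm {ω ω' : PricePath d} {u : ℝ≥0∞} (h : AgreeUpTo ω ω' u) :
    AgreeUpTo ω' ω u := fun s hs hsu => (h s hs hsu).symm

lemma st_eq {κ : PricePath d → ℝ≥0∞} (hκ : IsStoppingTimeE κ) {ω ω' : PricePath d}
    {u : ℝ≥0∞} (h : AgreeUpTo ω ω' u) (hle : κ ω ≤ u) : κ ω = κ ω' :=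
  hκ ω ω' (agree_mono hle h)

lemma st_eq' {κ : PricePath d → ℝ≥0∞} (hκ : IsStoppingTimeE κ) {ω ω' : PricePath d}
    {u : ℝ≥0∞} (h : AgreeUpTo ω ω' u) (hle : κ ω' ≤ u) : κ ω = κ ω' :=
  (hκ ω' ω (agree_mono hle (agree_symm h))).symm

lemma ad_eq {κ : PricePath d → ℝ≥0∞} {g : PricePath d → Fin d → ℝ}
    (hg : MeasurableAtTime κ g) {ω ω' : PricePath d}
    {u : ℝ≥0∞} (h : AgreeUpTo ω ω' u) (hle : κ ω ≤ u) : g ω = g ω' :=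
  hg ω ω' (agree_mono hle h)

lemma tau_mono (G : SimpleStrategy d T) (ω : PricePath d) :
    Monotone (fun l => G.τ l ω) :=
  monotone_nat_of_le_succ (fun l => G.mono l ω)

/-- the least stabilization index of the stopping-time sequence on a path. -/
noncomputable def normL (G : SimpleStrategy d T) (ω : PricePath d) : ℕ :=
  Nat.find (G.eventuallyConst ω)

lemma normL_spec (G : SimpleStrategy d T) (ω : PricePath d) :
    ∀ l, normL G ω ≤ l → G.τ l ω = G.τ (normL G ω) ω :=
  fun l hl => Nat.find_spec (G.eventuallyConst ω) l hl

lemma normL_min {G : SimpleStrategy d T} {ω : PricePath d} {L : ℕ}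
    (h : ∀ l, L ≤ l → G.τ l ω = G.τ L ω) : normL G ω ≤ L :=
  Nat.find_min' _ h

end VovkAux
namespace VovkAux

lemma normL_transfer {G : SimpleStrategy d T} {ω ω' : PricePath d} {l l0 : ℕ}
    (hA : AgreeUpTo ω ω' (G.τ l ω))
    (hst : ∀ m, l0 ≤ m → G.τ m ω' = G.τ l ω) : normL G ω ≤ l0 := by
  have hm2 : ∀ m, l0 ≤ m → G.τ m ω = G.τ l ω := fun m hmge => by
    have h2 := st_eq' (G.stopping m) hA (le_of_eq (hst m hmge))
    rw [h2, hst m hmge]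
  exact normL_min (fun m h => by rw [hm2 m h, hm2 l0 le_rfl])

/-- Normalization of a strategy: after the stabilization index, the stopping times
are set to `∞` and the positions to `0`.  This does not change the integral. -/
noncomputable def normalize (G : SimpleStrategy d T) : SimpleStrategy d T where
  τ := fun l ω => if l ≤ normL G ω then G.τ l ω else ∞
  g := fun l ω => if l < normL G ω then G.g l ω else 0
  stopping := by
    intro l ω ω' hA
    dsimp only at hA ⊢
    by_cases hl : l ≤ normL G ω
    · rw [if_pos hl] at hA ⊢
      have h1 : G.τ l ω = G.τ l ω' := st_eq (G.stopping l) hA le_rfl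
      have hl' : l ≤ normL G ω' := by
        by_contra hcon
        push_neg at hcon
        have hst : ∀ m, normL G ω' ≤ m → G.τ m ω' = G.τ l ω := fun m hm => by
          rw [normL_spec G ω' m hm, ← normL_spec G ω' l hcon.le, ← h1]
        have := normL_transfer hA hst
        omega
      rw [if_pos hl', ← h1]
    · rw [if_neg hl] at hA ⊢
      have hτ : ∀ m, G.τ m ω = G.τ m ω' := fun m => st_eq (G.stopping m) hA le_top
      have hL : normL G ω' = normL G ω := by
        apply le_antisymm
        · exact normL_min (fun m hm => by
            rw [← hτ m, ← hτ (normL G ω), normL_spec G ω m hm])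
        · exact normL_min (fun m hm => by
            rw [hτ m, hτ (normL G ω'), normL_spec G ω' m hm])
      rw [if_neg (by rw [hL]; exact hl)]
  zero := fun ω => by rw [if_pos (Nat.zero_le _), G.zero]
  mono := by
    intro l ω
    by_cases h1 : l + 1 ≤ normL G ω
    · rw [if_pos (by omega : l ≤ normL G ω), if_pos h1]; exact G.mono l ω
    · rw [if_neg h1]; exact le_top
  eventuallyConst := by
    intro ω
    exact ⟨normL G ω + 1, fun l hl => by rw [if_neg (by omega), if_neg (by omega)]⟩
  adapted := by
    intro l ω ω' hA
    dsimp only at hA ⊢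
    by_cases hl : l ≤ normL G ω
    · rw [if_pos hl] at hA
      have h1 : G.τ l ω = G.τ l ω' := st_eq (G.stopping l) hA le_rfl
      have hg : G.g l ω = G.g l ω' := ad_eq (G.adapted l) hA le_rfl
      by_cases hlt : l < normL G ω
      · have hlt' : l < normL G ω' := by
          rcases lt_or_ge l (normL G ω') with h | h
          · exact h
          · exfalso
            have hst : ∀ m, normL G ω' ≤ m → G.τ m ω' = G.τ l ω := fun m hm => by
              rw [normL_spec G ω' m hm, ← normL_spec G ω' l h, ← h1]
            have := normL_transfer hA hst
            omega
        rw [if_pos hlt, if_pos hlt', hg]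
      · have hlt' : ¬ l < normL G ω' := by
          intro hcon
          have hst : ∀ m, l ≤ m → G.τ m ω = G.τ l ω := fun m hm => by
            rw [normL_spec G ω m (by omega)]
            congr 1
            omega
          have htr : ∀ m, l ≤ m → G.τ m ω' = G.τ l ω' := fun m hm => by
            have h2 := st_eq (G.stopping m) hA (le_of_eq (hst m hm))
            rw [← h2, hst m hm, h1]
          have : normL G ω' ≤ l := normL_min (fun m hm => by rw [htr m hm, htr l le_rfl])
          omega
        rw [if_neg hlt, if_neg hlt']
    · rw [if_neg hl] at hA
      have hτ : ∀ m, G.τ m ω = G.τ m ω' := fun m => st_eq (G.stopping m) hA le_top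
      have hg : G.g l ω = G.g l ω' := ad_eq (G.adapted l) hA le_top
      have hL : normL G ω' = normL G ω := by
        apply le_antisymm
        · exact normL_min (fun m hm => by
            rw [← hτ m, ← hτ (normL G ω), normL_spec G ω m hm])
        · exact normL_min (fun m hm => by
            rw [hτ m, hτ (normL G ω'), normL_spec G ω' m hm])
      by_cases hlt : l < normL G ω
      · rw [if_pos hlt, if_pos (by rw [hL]; exact hlt), hg]
      · rw [if_neg hlt, if_neg (by rw [hL]; exact hlt)]
  bdd := by
    intro l
    obtain ⟨C, hC⟩ := G.bdd l
    refine ⟨max C 0, fun ω i => ?_⟩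
    by_cases hl : l < normL G ω
    · rw [if_pos hl]; exact (hC ω i).trans (le_max_left _ _)
    · rw [if_neg hl]; simp

/-- Property of a strategy whose stopping times are eventually `∞` on every path. -/
def Qp (G : SimpleStrategy d T) : Prop := ∀ ω, ∃ L, ∀ l, L ≤ l → G.τ l ω = ∞

lemma Qp_normalize (G : SimpleStrategy d T) : Qp (normalize G) :=
  fun ω => ⟨normL G ω + 1, fun l hl => by
    show (if l ≤ normL G ω then G.τ l ω else ∞) = ∞
    rw [if_neg (by omega)]⟩

lemma integ_normalize (G : SimpleStrategy d T) (t : ℝ) (ω : PricePath d) :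
    integ (normalize G) t ω = integ G t ω := by
  unfold integ
  apply tsum_congr
  intro l
  show (∑ i, (if l < normL G ω then G.g l ω else 0) i *
      (stopVal ω (if l + 1 ≤ normL G ω then G.τ (l+1) ω else ∞) t i -
       stopVal ω (if l ≤ normL G ω then G.τ l ω else ∞) t i)) = _
  by_cases hl : l < normL G ω
  · rw [if_pos hl, if_pos (by omega : l ≤ normL G ω), if_pos (by omega : l + 1 ≤ normL G ω)]
  · rw [if_neg hl]
    have h1 : G.τ (l+1) ω = G.τ l ω := by
      rw [normL_spec G ω (l+1) (by omega), normL_spec G ω l (by omega)]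
    rw [h1]
    simp

end VovkAux
namespace VovkAux

/-- Merged stopping-time sequence of two strategies: `mTau G1 G2 l` is the `l`-th element
of the sorted merge of the two sequences of stopping times. -/
noncomputable def mTau (G1 G2 : SimpleStrategy d T) (l : ℕ) (ω : PricePath d) : ℝ≥0∞ :=
  (Finset.range (l+1)).sup fun i => G1.τ i ω ⊓ G2.τ (l - i) ω

lemma le_mTau (G1 G2 : SimpleStrategy d T) {i l : ℕ} (hi : i ≤ l) (ω : PricePath d) :
    G1.τ i ω ⊓ G2.τ (l - i) ω ≤ mTau G1 G2 l ω :=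
  Finset.le_sup (f := fun i => G1.τ i ω ⊓ G2.τ (l - i) ω) (Finset.mem_range.2 (by omega))

lemma mTau_symm (G1 G2 : SimpleStrategy d T) (l : ℕ) (ω : PricePath d) :
    mTau G1 G2 l ω = mTau G2 G1 l ω := by
  have key : ∀ (A B : SimpleStrategy d T) (i : ℕ), i < l + 1 →
      A.τ i ω ⊓ B.τ (l - i) ω ≤ mTau B A l ω := by
    intro A B i hi
    have h : l - (l - i) = i := by omega
    have h2 : B.τ (l-i) ω ⊓ A.τ (l - (l - i)) ω ≤ mTau B A l ω := le_mTau B A (by omega) ω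
    rw [h] at h2
    exact (le_of_eq (inf_comm _ _)).trans h2
  apply le_antisymm <;>
  · refine Finset.sup_le fun i hi => ?_
    rw [Finset.mem_range] at hi
    exact key _ _ i hi

lemma mTau_le_left (G1 G2 : SimpleStrategy d T) (l : ℕ) (ω : PricePath d) :
    mTau G1 G2 l ω ≤ G1.τ l ω := by
  refine Finset.sup_le fun i hi => ?_
  rw [Finset.mem_range] at hi
  exact inf_le_left.trans (tau_mono G1 ω (by omega))

lemma mTau_zero (G1 G2 : SimpleStrategy d T) (ω : PricePath d) :
    mTau G1 G2 0 ω = 0 := by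
  simp [mTau, G1.zero, G2.zero]

lemma mTau_mono (G1 G2 : SimpleStrategy d T) (l : ℕ) (ω : PricePath d) :
    mTau G1 G2 l ω ≤ mTau G1 G2 (l+1) ω := by
  refine Finset.sup_le fun i hi => ?_
  rw [Finset.mem_range] at hi
  calc G1.τ i ω ⊓ G2.τ (l - i) ω ≤ G1.τ i ω ⊓ G2.τ (l + 1 - i) ω :=
        inf_le_inf le_rfl (tau_mono G2 ω (by omega))
  _ ≤ _ := le_mTau _ _ (by omega) ω

lemma mTau_monotone (G1 G2 : SimpleStrategy d T) (ω : PricePath d) :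
    Monotone (fun l => mTau G1 G2 l ω) :=
  monotone_nat_of_le_succ (fun l => mTau_mono G1 G2 l ω)

lemma inf_st_agree {κ1 κ2 : PricePath d → ℝ≥0∞} (h1 : IsStoppingTimeE κ1)
    (h2 : IsStoppingTimeE κ2) {ω ω' : PricePath d} {u : ℝ≥0∞}
    (hA : AgreeUpTo ω ω' u) (hle : κ1 ω ⊓ κ2 ω ≤ u) :
    κ1 ω ⊓ κ2 ω = κ1 ω' ⊓ κ2 ω' := by
  rcases le_total (κ1 ω) (κ2 ω) with h | h
  · rw [inf_eq_left.2 h] at hle ⊢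
    have e1 : κ1 ω = κ1 ω' := st_eq h1 hA hle
    have e2 : κ1 ω' ≤ κ2 ω' := by
      by_contra hcon
      push_neg at hcon
      have e3 : κ2 ω = κ2 ω' := st_eq' h2 hA ((hcon.le.trans (e1.symm.le)).trans hle)
      rw [← e3, ← e1] at hcon
      exact absurd h (not_le.2 hcon)
    rw [inf_eq_left.2 e2, e1]
  · rw [inf_eq_right.2 h] at hle ⊢
    have e1 : κ2 ω = κ2 ω' := st_eq h2 hA hle
    have e2 : κ2 ω' ≤ κ1 ω' := by
      by_contra hcon
      push_neg at hcon
      have e3 : κ1 ω = κ1 ω' := st_eq' h1 hA ((hcon.le.trans (e1.symm.le)).trans hle)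
      rw [← e3, ← e1] at hcon
      exact absurd h (not_le.2 hcon)
    rw [inf_eq_right.2 e2, e1]

lemma mTau_stopping (G1 G2 : SimpleStrategy d T) (l : ℕ) :
    IsStoppingTimeE (fun ω => mTau G1 G2 l ω) := by
  intro ω ω' hA
  dsimp only at hA ⊢
  unfold mTau
  refine Finset.sup_congr rfl fun i hi => ?_
  rw [Finset.mem_range] at hi
  exact inf_st_agree (G1.stopping i) (G2.stopping (l - i)) hA (le_mTau _ _ (by omega) ω)

/-- The index of the active position of the first strategy during the `l`-th merged
interval. -/
noncomputable def aIdx (G1 G2 : SimpleStrategy d T) (l : ℕ) (ω : PricePath d) : ℕ :=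
  Nat.findGreatest (fun i => G1.τ i ω ≤ mTau G1 G2 l ω) l

lemma aIdx_le (G1 G2 : SimpleStrategy d T) (l : ℕ) (ω : PricePath d) :
    aIdx G1 G2 l ω ≤ l := Nat.findGreatest_le l

lemma aIdx_tau_le (G1 G2 : SimpleStrategy d T) (l : ℕ) (ω : PricePath d) :
    G1.τ (aIdx G1 G2 l ω) ω ≤ mTau G1 G2 l ω :=
  Nat.findGreatest_spec (P := fun i => G1.τ i ω ≤ mTau G1 G2 l ω) (Nat.zero_le l)
    (by show G1.τ 0 ω ≤ _; rw [G1.zero]; exact zero_le)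

lemma mTau_succ_le_of_lt (G1 G2 : SimpleStrategy d T) {l i : ℕ} {ω : PricePath d}
    (h : mTau G1 G2 l ω < G1.τ i ω) : mTau G1 G2 (l+1) ω ≤ G1.τ i ω := by
  refine Finset.sup_le fun p hp => ?_
  rw [Finset.mem_range] at hp
  rcases le_or_gt p i with hpi | hpi
  · exact inf_le_left.trans (tau_mono G1 ω hpi)
  · have hil : i ≤ l := by omega
    have h2 : G2.τ (l - i) ω ≤ mTau G1 G2 l ω := by
      rcases le_total (G1.τ i ω) (G2.τ (l - i) ω) with hc | hc
      · exfalso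
        have := le_mTau G1 G2 hil ω
        rw [inf_eq_left.2 hc] at this
        exact absurd h (not_lt.2 this)
      · have := le_mTau G1 G2 hil ω
        rwa [inf_eq_right.2 hc] at this
    have h3 : G2.τ (l + 1 - p) ω ≤ G2.τ (l - i) ω := tau_mono G2 ω (by omega)
    exact inf_le_right.trans ((h3.trans h2).trans h.le)

lemma mTau_succ_le_aIdx (G1 G2 : SimpleStrategy d T) (l : ℕ) (ω : PricePath d) :
    mTau G1 G2 (l+1) ω ≤ G1.τ (aIdx G1 G2 l ω + 1) ω := by
  rcases eq_or_lt_of_le (aIdx_le G1 G2 l ω) with h | h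
  · rw [h]
    exact mTau_le_left G1 G2 (l+1) ω
  · have hng := Nat.findGreatest_is_greatest (Nat.lt_succ_self (aIdx G1 G2 l ω)) (by omega)
    push_neg at hng
    exact mTau_succ_le_of_lt G1 G2 hng

end VovkAux
namespace VovkAux

lemma aIdx_agree (G1 G2 : SimpleStrategy d T) (l : ℕ) {ω ω' : PricePath d}
    (hA : AgreeUpTo ω ω' (mTau G1 G2 l ω)) :
    aIdx G1 G2 l ω = aIdx G1 G2 l ω' := by
  have hρ : mTau G1 G2 l ω = mTau G1 G2 l ω' := mTau_stopping G1 G2 l ω ω' hA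
  have hpred : (fun i => G1.τ i ω ≤ mTau G1 G2 l ω)
      = (fun i => G1.τ i ω' ≤ mTau G1 G2 l ω') := by
    funext i
    apply propext
    constructor
    · intro h
      rw [← st_eq (G1.stopping i) hA h, ← hρ]
      exact h
    · intro h
      have e : G1.τ i ω = G1.τ i ω' :=
        st_eq' (G1.stopping i) hA (le_of_le_of_eq h hρ.symm)
      rw [e]
      exact h.trans hρ.symm.le
  unfold aIdx
  have key : ∀ (P Q : ℕ → Prop) (ip : DecidablePred P) (iq : DecidablePred Q), P = Q →
      @Nat.findGreatest P ip l = @Nat.findGreatest Q iq l := by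
    intro P Q ip iq h
    subst h
    exact congrArg (fun inst => @Nat.findGreatest P inst l) (Subsingleton.elim ip iq)
  exact key _ _ _ _ hpred

noncomputable def merge (G1 G2 : SimpleStrategy d T) : SimpleStrategy d T where
  τ := fun l ω => mTau G1 G2 l ω
  g := fun l ω i => G1.g (aIdx G1 G2 l ω) ω i + G2.g (aIdx G2 G1 l ω) ω i
  stopping := fun l => mTau_stopping G1 G2 l
  zero := mTau_zero G1 G2
  mono := fun l ω => mTau_mono G1 G2 l ω
  eventuallyConst := by
    intro ω
    obtain ⟨L1, h1⟩ := G1.eventuallyConst ω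
    obtain ⟨L2, h2⟩ := G2.eventuallyConst ω
    refine ⟨L1 + L2, fun l hl => ?_⟩
    have key : ∀ m, L1 + L2 ≤ m → mTau G1 G2 m ω = G1.τ L1 ω ⊓ G2.τ L2 ω := by
      intro m hm
      apply le_antisymm
      · refine Finset.sup_le fun i hi => ?_
        rw [Finset.mem_range] at hi
        refine le_inf ?_ ?_
        · rcases le_or_gt i L1 with h | h
          · exact inf_le_left.trans (tau_mono G1 ω h)
          · exact inf_le_left.trans (h1 i h.le).le
        · rcases le_or_gt (m - i) L2 with h | h
          · exact inf_le_right.trans (tau_mono G2 ω h)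
          · exact inf_le_right.trans (h2 (m - i) h.le).le
      · have h3 : G1.τ L1 ω ⊓ G2.τ (m - L1) ω ≤ mTau G1 G2 m ω :=
          le_mTau G1 G2 (by omega) ω
        rwa [h2 (m - L1) (by omega)] at h3
    rw [key l hl, key (L1+L2) le_rfl]
  adapted := by
    intro l ω ω' hA
    dsimp only at hA ⊢
    funext i
    have e1 : aIdx G1 G2 l ω = aIdx G1 G2 l ω' := aIdx_agree G1 G2 l hA
    have hA2 : AgreeUpTo ω ω' (mTau G2 G1 l ω) := by
      rw [mTau_symm G2 G1]; exact hA
    have e2 : aIdx G2 G1 l ω = aIdx G2 G1 l ω' := aIdx_agree G2 G1 l hA2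
    have f1 : G1.g (aIdx G1 G2 l ω) ω = G1.g (aIdx G1 G2 l ω) ω' :=
      ad_eq (G1.adapted _) hA (aIdx_tau_le G1 G2 l ω)
    have f2 : G2.g (aIdx G2 G1 l ω) ω = G2.g (aIdx G2 G1 l ω) ω' :=
      ad_eq (G2.adapted _) hA2 (aIdx_tau_le G2 G1 l ω)
    rw [← e1, ← e2, f1, f2]
  bdd := by
    intro l
    refine ⟨(∑ p ∈ Finset.range (l+1), |Classical.choose (G1.bdd p)|) +
            (∑ p ∈ Finset.range (l+1), |Classical.choose (G2.bdd p)|), fun ω i => ?_⟩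
    have b1 : |G1.g (aIdx G1 G2 l ω) ω i| ≤ |Classical.choose (G1.bdd (aIdx G1 G2 l ω))| :=
      (Classical.choose_spec (G1.bdd (aIdx G1 G2 l ω)) ω i).trans (le_abs_self _)
    have b2 : |G2.g (aIdx G2 G1 l ω) ω i| ≤ |Classical.choose (G2.bdd (aIdx G2 G1 l ω))| :=
      (Classical.choose_spec (G2.bdd (aIdx G2 G1 l ω)) ω i).trans (le_abs_self _)
    have s1 : |Classical.choose (G1.bdd (aIdx G1 G2 l ω))| ≤
        ∑ p ∈ Finset.range (l+1), |Classical.choose (G1.bdd p)| :=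
      Finset.single_le_sum (f := fun p => |Classical.choose (G1.bdd p)|)
        (fun p _ => abs_nonneg _)
        (Finset.mem_range.2 (by have := aIdx_le G1 G2 l ω; omega))
    have s2 : |Classical.choose (G2.bdd (aIdx G2 G1 l ω))| ≤
        ∑ p ∈ Finset.range (l+1), |Classical.choose (G2.bdd p)| :=
      Finset.single_le_sum (f := fun p => |Classical.choose (G2.bdd p)|)
        (fun p _ => abs_nonneg _)
        (Finset.mem_range.2 (by have := aIdx_le G2 G1 l ω; omega))
    calc |G1.g (aIdx G1 G2 l ω) ω i + G2.g (aIdx G2 G1 l ω) ω i|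
        ≤ |G1.g (aIdx G1 G2 l ω) ω i| + |G2.g (aIdx G2 G1 l ω) ω i| := abs_add_le _ _
      _ ≤ _ := add_le_add (b1.trans s1) (b2.trans s2)

lemma Qp_merge {G1 G2 : SimpleStrategy d T} (h1 : Qp G1) (h2 : Qp G2) :
    Qp (merge G1 G2) := by
  intro ω
  obtain ⟨L1, hL1⟩ := h1 ω
  obtain ⟨L2, hL2⟩ := h2 ω
  refine ⟨L1 + L2, fun l hl => ?_⟩
  show mTau G1 G2 l ω = ∞
  have h3 : G1.τ L1 ω ⊓ G2.τ (l - L1) ω ≤ mTau G1 G2 l ω := le_mTau G1 G2 (by omega) ω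
  rw [hL1 L1 le_rfl, hL2 (l - L1) (by omega)] at h3
  simp only [inf_idem] at h3
  exact top_unique h3

end VovkAux
namespace VovkAux

lemma telescope (ω : PricePath d) (t : ℝ) (τ : ℕ → ℝ≥0∞) (g : ℕ → Fin d → ℝ)
    (ρ : ℕ → ℝ≥0∞) (a : ℕ → ℕ) (M : ℕ)
    (hτm : Monotone τ) (hρm : Monotone ρ)
    (hρ0 : ρ 0 = 0) (hρM : ρ M = ∞)
    (ha1 : ∀ l, l < M → τ (a l) ≤ ρ l)
    (ha2 : ∀ l, l < M → ρ (l+1) ≤ τ (a l + 1))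
    (haM : ∀ l, l < M → a l < M) :
    ∑ l ∈ Finset.range M, ∑ i, g (a l) i *
        (stopVal ω (ρ (l+1)) t i - stopVal ω (ρ l) t i)
      = ∑ p ∈ Finset.range M, ∑ i, g p i *
        (stopVal ω (τ (p+1)) t i - stopVal ω (τ p) t i) := by
  have step1 : ∀ l ∈ Finset.range M,
      (∑ i, g (a l) i * (stopVal ω (ρ (l+1)) t i - stopVal ω (ρ l) t i))
      = ∑ p ∈ Finset.range M, ∑ i, g p i *
          (stopVal ω ((ρ (l+1) ⊓ τ (p+1)) ⊔ τ p) t i -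
           stopVal ω ((ρ l ⊓ τ (p+1)) ⊔ τ p) t i) := by
    intro l hlm
    have hl : l < M := Finset.mem_range.1 hlm
    have h0 : ∀ p ∈ Finset.range M, p ≠ a l →
        (∑ i, g p i * (stopVal ω ((ρ (l+1) ⊓ τ (p+1)) ⊔ τ p) t i -
           stopVal ω ((ρ l ⊓ τ (p+1)) ⊔ τ p) t i)) = 0 := by
      intro p _ hne
      rcases lt_or_gt_of_ne hne with h | h
      · have h1 : τ (p+1) ≤ ρ l := (hτm (by omega : p + 1 ≤ a l)).trans (ha1 l hl)
        have c1 : (ρ l ⊓ τ (p+1)) ⊔ τ p = τ (p+1) := by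
          rw [inf_eq_right.2 h1, sup_eq_left.2 (hτm (Nat.le_succ p))]
        have c2 : (ρ (l+1) ⊓ τ (p+1)) ⊔ τ p = τ (p+1) := by
          rw [inf_eq_right.2 (h1.trans (hρm (Nat.le_succ l))),
            sup_eq_left.2 (hτm (Nat.le_succ p))]
        rw [c1, c2]
        simp
      · have h1 : ρ (l+1) ≤ τ p := (ha2 l hl).trans (hτm (by omega))
        have c1 : (ρ l ⊓ τ (p+1)) ⊔ τ p = τ p := by
          rw [inf_eq_left.2 (((hρm (Nat.le_succ l)).trans h1).trans (hτm (Nat.le_succ p))),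
            sup_eq_right.2 ((hρm (Nat.le_succ l)).trans h1)]
        have c2 : (ρ (l+1) ⊓ τ (p+1)) ⊔ τ p = τ p := by
          rw [inf_eq_left.2 (h1.trans (hτm (Nat.le_succ p))), sup_eq_right.2 h1]
        rw [c1, c2]
        simp
    have h1 : a l ∉ Finset.range M →
        (∑ i, g (a l) i * (stopVal ω ((ρ (l+1) ⊓ τ (a l +1)) ⊔ τ (a l)) t i -
           stopVal ω ((ρ l ⊓ τ (a l + 1)) ⊔ τ (a l)) t i)) = 0 :=
      fun h => absurd (Finset.mem_range.2 (haM l hl)) h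
    rw [Finset.sum_eq_single (a l) h0 h1]
    have c1 : (ρ l ⊓ τ (a l + 1)) ⊔ τ (a l) = ρ l := by
      rw [inf_eq_left.2 ((hρm (Nat.le_succ l)).trans (ha2 l hl)),
        sup_eq_left.2 (ha1 l hl)]
    have c2 : (ρ (l+1) ⊓ τ (a l + 1)) ⊔ τ (a l) = ρ (l+1) := by
      rw [inf_eq_left.2 (ha2 l hl),
        sup_eq_left.2 ((ha1 l hl).trans (hρm (Nat.le_succ l)))]
    rw [c1, c2]
  rw [Finset.sum_congr rfl step1, Finset.sum_comm]
  refine Finset.sum_congr rfl fun p hp => ?_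
  rw [Finset.sum_comm]
  refine Finset.sum_congr rfl fun i _ => ?_
  have tele := Finset.sum_range_sub
    (fun m => g p i * stopVal ω ((ρ m ⊓ τ (p+1)) ⊔ τ p) t i) M
  simp only [mul_sub]
  rw [tele]
  have cM : (ρ M ⊓ τ (p+1)) ⊔ τ p = τ (p+1) := by
    rw [hρM, top_inf_eq, sup_eq_left.2 (hτm (Nat.le_succ p))]
  have c0 : (ρ 0 ⊓ τ (p+1)) ⊔ τ p = τ p := by
    rw [hρ0]
    simp
  rw [cM, c0]

lemma integ_merge {G1 G2 : SimpleStrategy d T} (hQ1 : Qp G1) (hQ2 : Qp G2)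
    (t : ℝ) (ω : PricePath d) :
    integ (merge G1 G2) t ω = integ G1 t ω + integ G2 t ω := by
  obtain ⟨L1, hL1⟩ := hQ1 ω
  obtain ⟨L2, hL2⟩ := hQ2 ω
  set M := L1 + L2 + 1 with hM
  have hτ1 : ∀ p, M ≤ p → G1.τ p ω = ∞ := fun p hp => hL1 p (by omega)
  have hτ2 : ∀ p, M ≤ p → G2.τ p ω = ∞ := fun p hp => hL2 p (by omega)
  have hρtop : ∀ l, M ≤ l → mTau G1 G2 l ω = ∞ := by
    intro l hl
    have h3 := le_mTau G1 G2 (i := L1) (l := l) (by omega) ω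
    rw [hL1 L1 le_rfl, hL2 (l - L1) (by omega)] at h3
    simp only [inf_idem] at h3
    exact top_unique h3
  have e0 : integ (merge G1 G2) t ω = ∑ l ∈ Finset.range M, ∑ i,
      (G1.g (aIdx G1 G2 l ω) ω i + G2.g (aIdx G2 G1 l ω) ω i) *
      (stopVal ω (mTau G1 G2 (l+1) ω) t i - stopVal ω (mTau G1 G2 l ω) t i) := by
    unfold integ
    dsimp only [merge]
    apply tsum_eq_sum
    intro l hl
    rw [Finset.mem_range, not_lt] at hl
    rw [hρtop (l+1) (by omega), hρtop l hl]
    simp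
  have e1 : integ G1 t ω = ∑ p ∈ Finset.range M, ∑ i, G1.g p ω i *
      (stopVal ω (G1.τ (p+1) ω) t i - stopVal ω (G1.τ p ω) t i) := by
    unfold integ
    apply tsum_eq_sum
    intro p hp
    rw [Finset.mem_range, not_lt] at hp
    rw [hτ1 (p+1) (by omega), hτ1 p hp]
    simp
  have e2 : integ G2 t ω = ∑ p ∈ Finset.range M, ∑ i, G2.g p ω i *
      (stopVal ω (G2.τ (p+1) ω) t i - stopVal ω (G2.τ p ω) t i) := by
    unfold integ
    apply tsum_eq_sum
    intro p hp
    rw [Finset.mem_range, not_lt] at hp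
    rw [hτ2 (p+1) (by omega), hτ2 p hp]
    simp
  rw [e0, e1, e2]
  simp only [add_mul, Finset.sum_add_distrib]
  congr 1
  · exact telescope ω t (fun p => G1.τ p ω) (fun p => G1.g p ω)
      (fun l => mTau G1 G2 l ω) (fun l => aIdx G1 G2 l ω) M
      (tau_mono G1 ω) (mTau_monotone G1 G2 ω) (mTau_zero G1 G2 ω) (hρtop M le_rfl)
      (fun l _ => aIdx_tau_le G1 G2 l ω)
      (fun l _ => mTau_succ_le_aIdx G1 G2 l ω)
      (fun l hl => (aIdx_le G1 G2 l ω).trans_lt hl)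
  · exact telescope ω t (fun p => G2.τ p ω) (fun p => G2.g p ω)
      (fun l => mTau G1 G2 l ω) (fun l => aIdx G2 G1 l ω) M
      (tau_mono G2 ω) (mTau_monotone G1 G2 ω) (mTau_zero G1 G2 ω) (hρtop M le_rfl)
      (fun l _ => (aIdx_tau_le G2 G1 l ω).trans (mTau_symm G2 G1 l ω).le)
      (fun l _ => (mTau_symm G1 G2 (l+1) ω).le.trans (mTau_succ_le_aIdx G2 G1 l ω))
      (fun l hl => (aIdx_le G2 G1 l ω).trans_lt hl)

/-- iterated sum of strategies: `nsum H n` has the integral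
`∑_{k ≤ n} integ (H k)`. -/
noncomputable def nsum (H : ℕ → SimpleStrategy d T) : ℕ → SimpleStrategy d T
  | 0 => normalize (H 0)
  | n+1 => merge (nsum H n) (normalize (H (n+1)))

lemma Qp_nsum (H : ℕ → SimpleStrategy d T) : ∀ n, Qp (nsum H n)
  | 0 => Qp_normalize (H 0)
  | n+1 => Qp_merge (Qp_nsum H n) (Qp_normalize (H (n+1)))

lemma integ_nsum (H : ℕ → SimpleStrategy d T) (n : ℕ) (t : ℝ) (ω : PricePath d) :
    integ (nsum H n) t ω = ∑ k ∈ Finset.range (n+1), integ (H k) t ω := by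
  induction n with
  | zero => simp [nsum, integ_normalize]
  | succ n ih =>
      show integ (merge (nsum H n) (normalize (H (n+1)))) t ω = _
      rw [integ_merge (Qp_nsum H n) (Qp_normalize (H (n+1))) t ω, ih, integ_normalize]
      exact (Finset.sum_range_succ _ (n+1)).symm

end VovkAux
namespace VovkAux

lemma admissible_nsum {H : ℕ → SimpleStrategy d T} {c : ℕ → ℝ}
    (h : ∀ k, Admissible (c k) (H k)) {b : ℝ}
    (hb : ∀ n : ℕ, ∑ k ∈ Finset.range (n+1), c k ≤ b) :
    ∀ n, Admissible b (nsum H n) := by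
  intro n ω t ht
  rw [integ_nsum]
  have h3 : ∑ k ∈ Finset.range (n+1), (-(c k)) ≤
      ∑ k ∈ Finset.range (n+1), integ (H k) t ω :=
    Finset.sum_le_sum fun k _ => h k ω t ht
  have h4 : -b ≤ ∑ k ∈ Finset.range (n+1), (-(c k)) := by
    rw [Finset.sum_neg_distrib]
    exact neg_le_neg (hb n)
  exact h4.trans h3

lemma vovkNull_iUnion (hT : 0 ≤ T) {A : ℕ → Set (PricePath d)}
    (hA : ∀ k, VovkNull T (A k)) : VovkNull T (⋃ k, A k) := by
  intro ε hε
  have hεk : ∀ k : ℕ, (0:ℝ) < ε / 2 ^ (k+2) := fun k => by positivity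
  choose Hs hadm hsup using fun k => hA k (ε / 2 ^ (k+2)) (hεk k)
  have hsumb : ∀ n : ℕ, ∑ k ∈ Finset.range (n+1), ε / 2 ^ (k+2) ≤ ε := by
    intro n
    have h1 : ∀ k : ℕ, ε / 2 ^ (k+2) = ε/4 * (1/2)^k := by
      intro k
      rw [one_div, inv_pow, pow_add]
      ring
    rw [Finset.sum_congr rfl (fun k _ => h1 k), ← Finset.mul_sum]
    have h2 := sum_geometric_two_le (n+1)
    nlinarith [hε.le]
  refine ⟨fun n => nsum (fun k => Hs k n) n, ?_, ?_⟩
  · intro n ω t ht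
    rw [integ_nsum]
    have h3 : ∑ k ∈ Finset.range (n+1), (-(ε / 2 ^ (k+2))) ≤
        ∑ k ∈ Finset.range (n+1), integ (Hs k n) t ω :=
      Finset.sum_le_sum fun k _ => hadm k n ω t ht
    have h4 : -ε ≤ ∑ k ∈ Finset.range (n+1), (-(ε / 2 ^ (k+2))) := by
      rw [Finset.sum_neg_distrib]
      exact neg_le_neg (hsumb n)
    exact h4.trans h3
  · intro ω hω
    rw [Set.mem_iUnion] at hω
    obtain ⟨m, hm⟩ := hω
    have key : ∀ n, m ≤ n → ((ε / 2 ^ (m+2) + integ (Hs m n) T ω : ℝ) : EReal) ≤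
        ((ε + integ (nsum (fun k => Hs k n) n) T ω : ℝ) : EReal) := by
      intro n hn
      rw [EReal.coe_le_coe_iff, integ_nsum]
      have hmem : m ∈ Finset.range (n+1) := Finset.mem_range.2 (by omega)
      have hsplit : integ (Hs m n) T ω +
          ∑ k ∈ (Finset.range (n+1)).erase m, integ (Hs k n) T ω =
          ∑ k ∈ Finset.range (n+1), integ (Hs k n) T ω :=
        Finset.add_sum_erase _ (fun k => integ (Hs k n) T ω) hmem
      have hrest : ∑ k ∈ (Finset.range (n+1)).erase m, (-(ε / 2^(k+2))) ≤
          ∑ k ∈ (Finset.range (n+1)).erase m, integ (Hs k n) T ω :=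
        Finset.sum_le_sum fun k _ => hadm k n ω T ⟨hT, le_rfl⟩
      have hrest2 : ε / 2^(m+2) + ∑ k ∈ (Finset.range (n+1)).erase m, (ε / 2^(k+2)) =
          ∑ k ∈ Finset.range (n+1), (ε / 2^(k+2)) :=
        Finset.add_sum_erase _ (fun k => ε / 2^(k+2)) hmem
      have hrest3 : ∑ k ∈ (Finset.range (n+1)).erase m, (-(ε / 2^(k+2))) =
          -(∑ k ∈ (Finset.range (n+1)).erase m, (ε / 2^(k+2))) :=
        Finset.sum_neg_distrib _
      have hb := hsumb n
      linarith
    have h6 : Filter.liminf (fun n => ((ε/2^(m+2) + integ (Hs m n) T ω : ℝ) : EReal))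
        Filter.atTop ≤
        Filter.liminf (fun n => ((ε + integ (nsum (fun k => Hs k n) n) T ω : ℝ) : EReal))
        Filter.atTop := by
      exact Filter.liminf_le_liminf (Filter.eventually_atTop.2 ⟨m, key⟩)
    exact (hsup m ω hm).trans h6

lemma ereal_coe_ennreal_sum (s : Finset ℕ) (f : ℕ → ℝ≥0∞) :
    ((∑ k ∈ s, f k : ℝ≥0∞) : EReal) = ∑ k ∈ s, ((f k : ℝ≥0∞) : EReal) :=
  map_sum (⟨⟨(fun x : ℝ≥0∞ => (x : EReal)), EReal.coe_ennreal_zero⟩,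
    EReal.coe_ennreal_add⟩ : ℝ≥0∞ →+ EReal) f s

lemma ereal_coe_real_sum (s : Finset ℕ) (f : ℕ → ℝ) :
    ((∑ k ∈ s, f k : ℝ) : EReal) = ∑ k ∈ s, ((f k : ℝ) : EReal) :=
  map_sum (⟨⟨Real.toEReal, EReal.coe_zero⟩,
    fun x y => EReal.coe_add x y⟩ : ℝ →+ EReal) f s

lemma sum_liminf_le (s : Finset ℕ) (u : ℕ → ℕ → EReal) :
    ∑ k ∈ s, Filter.liminf (u k) Filter.atTop ≤
      Filter.liminf (fun n => ∑ k ∈ s, u k n) Filter.atTop := by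
  induction s using Finset.cons_induction with
  | empty => simp [Filter.liminf_const]
  | cons a s ha ih =>
      rw [Finset.sum_cons]
      calc Filter.liminf (u a) Filter.atTop + ∑ k ∈ s, Filter.liminf (u k) Filter.atTop
          ≤ Filter.liminf (u a) Filter.atTop +
            Filter.liminf (fun n => ∑ k ∈ s, u k n) Filter.atTop :=
            add_le_add le_rfl ih
        _ ≤ Filter.liminf (fun n => u a n + ∑ k ∈ s, u k n) Filter.atTop :=
            EReal.le_liminf_add
        _ = Filter.liminf (fun n => ∑ k ∈ Finset.cons a s ha, u k n) Filter.atTop := by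
            simp only [Finset.sum_cons]

lemma coe_tsum_le {f : ℕ → ℝ≥0∞} {x : EReal}
    (hx : ∀ K : ℕ, ((∑ k ∈ Finset.range K, f k : ℝ≥0∞) : EReal) ≤ x) :
    ((∑' k, f k : ℝ≥0∞) : EReal) ≤ x := by
  have h0 : (0 : EReal) ≤ x := by simpa using hx 0
  refine le_of_forall_lt fun c hc => ?_
  induction c with
  | bot => exact lt_of_lt_of_le EReal.bot_lt_zero h0
  | coe r =>
      rcases le_or_gt 0 r with hr | hr
      · have hr2 : ((ENNReal.ofReal r : ℝ≥0∞) : EReal) = (r : EReal) := by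
          rw [EReal.coe_ennreal_ofReal, max_eq_left hr]
        have hlt : ENNReal.ofReal r < ∑' k, f k := by
          rw [← EReal.coe_ennreal_lt_coe_ennreal_iff, hr2]
          exact hc
        rw [ENNReal.tsum_eq_iSup_nat] at hlt
        obtain ⟨K, hK⟩ := lt_iSup_iff.1 hlt
        calc (r : EReal) = _ := hr2.symm
          _ < ((∑ a ∈ Finset.range K, f a : ℝ≥0∞) : EReal) :=
            EReal.coe_ennreal_lt_coe_ennreal_iff.2 hK
          _ ≤ x := hx K
      · refine lt_of_lt_of_le ?_ h0
        exact_mod_cast hr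
  | top => exact absurd hc not_top_lt

end VovkAux
open VovkAux

/-- The outer expectation is countably subadditive. -/
theorem outerExp_countably_subadditive (d : ℕ) (T : ℝ) (hT : 0 < T)
    (Z : ℕ → ℝ → PricePath d → ℝ≥0∞) :
    outerExp d T (fun t ω => ∑' k : ℕ, Z k t ω) ≤ ∑' k : ℕ, outerExp d T (Z k) := by
  refine ENNReal.le_of_forall_pos_le_add fun ε hε hfin => ?_
  obtain ⟨δ, hδpos, hδsum⟩ := ENNReal.exists_pos_sum_of_countable
    (ENNReal.coe_ne_zero.2 hε.ne') ℕ
  have key : ∀ k : ℕ, ∃ lam : ℝ, 0 < lam ∧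
      ENNReal.ofReal lam ≤ outerExp d T (Z k) + δ k ∧
      ∃ Ω' : Set (PricePath d), VovkNull T Ω'ᶜ ∧
      ∃ H : ℕ → SimpleStrategy d T, (∀ n, Admissible lam (H n)) ∧
        ∀ ω ∈ Ω', ∀ τ : PricePath d → ℝ, IsStoppingTime01 T τ →
          ((Z k (τ ω) ω : ℝ≥0∞) : EReal) ≤
            Filter.liminf (fun n => ((lam + integ (H n) (τ ω) ω : ℝ) : EReal))
              Filter.atTop := by
    intro k
    have hk : outerExp d T (Z k) ≠ ⊤ :=
      (lt_of_le_of_lt (ENNReal.le_tsum k) hfin).ne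
    have hlt : outerExp d T (Z k) < outerExp d T (Z k) + δ k :=
      ENNReal.lt_add_right hk (ENNReal.coe_ne_zero.2 (hδpos k).ne')
    obtain ⟨e, he, helt⟩ := sInf_lt_iff.1 hlt
    obtain ⟨lam, hpos, heq, Ω', hnull, H, hadm, hsup⟩ := he
    exact ⟨lam, hpos, by rw [← heq]; exact helt.le, Ω', hnull, H, hadm, hsup⟩
  choose lam hlamp hlamle Ω' hnull Hs hadm hsup using key
  have hofsum : ∑' k, ENNReal.ofReal (lam k) ≤ (∑' k, outerExp d T (Z k)) + ε := by
    calc ∑' k, ENNReal.ofReal (lam k) ≤ ∑' k, (outerExp d T (Z k) + δ k) :=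
          ENNReal.tsum_le_tsum hlamle
      _ = (∑' k, outerExp d T (Z k)) + ∑' k, (δ k : ℝ≥0∞) := ENNReal.tsum_add
      _ ≤ _ := add_le_add le_rfl hδsum.le
  have hne : ∑' k, ENNReal.ofReal (lam k) ≠ ⊤ :=
    (lt_of_le_of_lt hofsum (ENNReal.add_lt_top.2 ⟨hfin, ENNReal.coe_lt_top⟩)).ne
  have hsummable : Summable lam := by
    have h1 := ENNReal.summable_toReal hne
    refine h1.congr fun k => ?_
    rw [ENNReal.toReal_ofReal (hlamp k).le]
  set Λ := ∑' k, lam k with hΛ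
  have hΛpos : 0 < Λ :=
    lt_of_lt_of_le (hlamp 0) (Summable.le_tsum hsummable 0 (fun j _ => (hlamp j).le))
  have hΛofReal : ENNReal.ofReal Λ = ∑' k, ENNReal.ofReal (lam k) :=
    ENNReal.ofReal_tsum_of_nonneg (fun k => (hlamp k).le) hsummable
  have hpartial : ∀ n : ℕ, ∑ k ∈ Finset.range (n+1), lam k ≤ Λ :=
    fun n => Summable.sum_le_tsum _ (fun k _ => (hlamp k).le) hsummable
  have hfinal : outerExp d T (fun t ω => ∑' k : ℕ, Z k t ω) ≤ ENNReal.ofReal Λ := by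
    apply sInf_le
    refine ⟨Λ, hΛpos, rfl, ⋂ k, Ω' k, ?_, fun n => nsum (fun k => Hs k n) n, ?_, ?_⟩
    · rw [Set.compl_iInter]
      exact vovkNull_iUnion hT.le hnull
    · exact fun n => admissible_nsum (fun k => hadm k n) hpartial n
    · intro ω hω τ hτ
      have hωk : ∀ k, ω ∈ Ω' k := Set.mem_iInter.1 hω
      have htmem : τ ω ∈ Icc (0:ℝ) T := hτ.1 ω
      dsimp only
      refine coe_tsum_le fun K => ?_
      rw [ereal_coe_ennreal_sum]
      have step1 : ∑ k ∈ Finset.range K, ((Z k (τ ω) ω : ℝ≥0∞) : EReal) ≤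
          ∑ k ∈ Finset.range K, Filter.liminf
            (fun n => ((lam k + integ (Hs k n) (τ ω) ω : ℝ) : EReal)) Filter.atTop :=
        Finset.sum_le_sum fun k _ => hsup k ω (hωk k) τ hτ
      have step2 := sum_liminf_le (Finset.range K)
        (fun k n => ((lam k + integ (Hs k n) (τ ω) ω : ℝ) : EReal))
      have step3 : Filter.liminf (fun n => ∑ k ∈ Finset.range K,
          ((lam k + integ (Hs k n) (τ ω) ω : ℝ) : EReal)) Filter.atTop ≤
          Filter.liminf
            (fun n => ((Λ + integ (nsum (fun k => Hs k n) n) (τ ω) ω : ℝ) : EReal))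
            Filter.atTop := by
        refine Filter.liminf_le_liminf (Filter.eventually_atTop.2 ⟨K, fun n hn => ?_⟩)
        rw [← ereal_coe_real_sum, EReal.coe_le_coe_iff]
        have hsub : Finset.range K ⊆ Finset.range (n+1) := Finset.range_subset_range.2 (by omega)
        have hnn : ∀ k ∈ Finset.range (n+1), k ∉ Finset.range K →
            0 ≤ lam k + integ (Hs k n) (τ ω) ω := by
          intro k _ _
          have := hadm k n ω (τ ω) htmem
          linarith
        have h5 : ∑ k ∈ Finset.range K, (lam k + integ (Hs k n) (τ ω) ω) ≤
            ∑ k ∈ Finset.range (n+1), (lam k + integ (Hs k n) (τ ω) ω) :=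
          Finset.sum_le_sum_of_subset_of_nonneg hsub hnn
        simp only [Finset.sum_add_distrib] at h5 ⊢
        have h6 := hpartial n
        have h7 : integ (nsum (fun k => Hs k n) n) (τ ω) ω =
            ∑ k ∈ Finset.range (n+1), integ (Hs k n) (τ ω) ω := integ_nsum _ n _ ω
        linarith
      exact (step1.trans step2).trans step3
  calc outerExp d T (fun t ω => ∑' k : ℕ, Z k t ω) ≤ ENNReal.ofReal Λ := hfinal
    _ = ∑' k, ENNReal.ofReal (lam k) := hΛofReal
    _ ≤ _ := hofsum
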